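/- Let (G,v₀,W) be a Banach–Mazur game on a finite graph and let P be a reasonable probability measure on Paths(G,v₀). If Player 0 has a move-counting winning strategy for (G,v₀,W), then P(W) = 1. -/

import Mathlib

open MeasureTheory
open scoped ENNReal NNReal

namespace BMGame

variable {V : Type*}

/-- The prefix of length `n` of the infinite sequence `ρ`. -/
def pref (ρ : ℕ → V) (n : ℕ) : List V := (List.range n).map ρ

/-- `ρ` is an infinite path of the graph `E` starting at `v₀`. -/
def IsPlay (E : V → V → Prop) (v₀ : V) (ρ : ℕ → V) : Prop :=
  ρ 0 = v₀ ∧ ∀ n, E (ρ n) (ρ (n + 1))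

/-- `π` is a nonempty finite path of the graph `E` starting at `v₀` (a position of the game). -/
def IsPos (E : V → V → Prop) (v₀ : V) (π : List V) : Prop :=
  π.head? = some v₀ ∧ π.Chain' E

/-- A strategy for player 0 assigns to each position the (nonempty) block of vertices
appended by player 0's move; `(π ++ f π).Chain' E` says that this block is a path
starting at the last vertex of `π`. -/
def IsStrategy (E : V → V → Prop) (v₀ : V) (f : List V → List V) : Prop :=
  ∀ π, IsPos E v₀ π → f π ≠ [] ∧ (π ++ f π).Chain' E

/-- The play `ρ` is consistent with the strategy `f`: there are cut points
`c 0, c 1, …` (the lengths of the prefixes built after each move of player 1) such that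
after each such prefix player 0 plays according to `f`, and player 1 then appends a
nonempty block. -/
def ConsGen (f : List V → List V) (ρ : ℕ → V) : Prop :=
  ∃ c : ℕ → ℕ, 1 ≤ c 0 ∧ ∀ i,
    pref ρ (c i + (f (pref ρ (c i))).length) = pref ρ (c i) ++ f (pref ρ (c i)) ∧
    c i + (f (pref ρ (c i))).length < c (i + 1)

/-- `f` is a winning strategy for player 0 in the Banach–Mazur game `(E, v₀, W)`. -/
def WinningStrategy (E : V → V → Prop) (v₀ : V) (W : Set (ℕ → V))
    (f : List V → List V) : Prop :=
  IsStrategy E v₀ f ∧ ∀ ρ, IsPlay E v₀ ρ → ConsGen f ρ → ρ ∈ W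

/-- The strategy `f` is `b`-bounded: each of its moves has length at most `b`. -/
def BoundedBy (E : V → V → Prop) (v₀ : V) (b : ℕ) (f : List V → List V) : Prop :=
  ∀ π, IsPos E v₀ π → (f π).length ≤ b

/-- A positional strategy assigns to each vertex the nonempty block appended. -/
def IsPositional (E : V → V → Prop) (f : V → List V) : Prop :=
  ∀ v, f v ≠ [] ∧ (v :: f v).Chain' E

/-- Consistency with a positional strategy: after each prefix chosen by player 1,
player 0 plays `f` of the current (last) vertex. -/
def ConsPositional (f : V → List V) (ρ : ℕ → V) : Prop :=
  ∃ c : ℕ → ℕ, 1 ≤ c 0 ∧ ∀ i,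
    pref ρ (c i + (f (ρ (c i - 1))).length) = pref ρ (c i) ++ f (ρ (c i - 1)) ∧
    c i + (f (ρ (c i - 1))).length < c (i + 1)

def PositionalWinning (E : V → V → Prop) (v₀ : V) (W : Set (ℕ → V)) (f : V → List V) : Prop :=
  IsPositional E f ∧ ∀ ρ, IsPlay E v₀ ρ → ConsPositional f ρ → ρ ∈ W

/-- Structural requirement shared by move-counting and length-counting strategies:
for `n ≥ 1`, `h v n` is a nonempty block forming a path from `v`. -/
def IsCountingStrategy (E : V → V → Prop) (h : V → ℕ → List V) : Prop :=
  ∀ v n, 1 ≤ n → h v n ≠ [] ∧ (v :: h v n).Chain' E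

/-- Consistency with a move-counting strategy: at its `i`-th move (`i ≥ 1`) player 0 plays
`h (current vertex) i`. -/
def ConsMoveCounting (h : V → ℕ → List V) (ρ : ℕ → V) : Prop :=
  ∃ c : ℕ → ℕ, 1 ≤ c 0 ∧ ∀ i,
    pref ρ (c i + (h (ρ (c i - 1)) (i + 1)).length) = pref ρ (c i) ++ h (ρ (c i - 1)) (i + 1) ∧
    c i + (h (ρ (c i - 1)) (i + 1)).length < c (i + 1)

def MoveCountingWinning (E : V → V → Prop) (v₀ : V) (W : Set (ℕ → V))
    (h : V → ℕ → List V) : Prop :=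
  IsCountingStrategy E h ∧ ∀ ρ, IsPlay E v₀ ρ → ConsMoveCounting h ρ → ρ ∈ W

/-- Consistency with a length-counting strategy: after a prefix of length `c i`
player 0 plays `h (current vertex) (c i)`. -/
def ConsLengthCounting (h : V → ℕ → List V) (ρ : ℕ → V) : Prop :=
  ∃ c : ℕ → ℕ, 1 ≤ c 0 ∧ ∀ i,
    pref ρ (c i + (h (ρ (c i - 1)) (c i)).length) = pref ρ (c i) ++ h (ρ (c i - 1)) (c i) ∧
    c i + (h (ρ (c i - 1)) (c i)).length < c (i + 1)

def LengthCountingWinning (E : V → V → Prop) (v₀ : V) (W : Set (ℕ → V))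
    (h : V → ℕ → List V) : Prop :=
  IsCountingStrategy E h ∧ ∀ ρ, IsPlay E v₀ ρ → ConsLengthCounting h ρ → ρ ∈ W

/-- The segment `ρ a, ρ (a+1), …, ρ (b-1)` of an infinite sequence. -/
def seg (ρ : ℕ → V) (a b : ℕ) : List V := (List.range (b - a)).map fun j => ρ (a + j)

/-- A last-move strategy is defined on all nonempty finite paths of the graph. -/
def IsLastMove (E : V → V → Prop) (g : List V → List V) : Prop :=
  ∀ π, π ≠ [] → π.Chain' E → g π ≠ [] ∧ (π ++ g π).Chain' E

/-- Consistency with the last-move strategy `g`: the play decomposes as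
`π₁ g(π₁) π₂ g(π₂) ⋯` where the `πᵢ` are the (nonempty) moves of player 1. -/
def ConsLastMove (g : List V → List V) (ρ : ℕ → V) : Prop :=
  ∃ s e : ℕ → ℕ, s 0 = 0 ∧ (∀ i, s i < e i) ∧ ∀ i,
    seg ρ (e i) (e i + (g (seg ρ (s i) (e i))).length) = g (seg ρ (s i) (e i)) ∧
    s (i + 1) = e i + (g (seg ρ (s i) (e i))).length

def LastMoveWinning (E : V → V → Prop) (v₀ : V) (W : Set (ℕ → V)) (g : List V → List V) : Prop :=
  IsLastMove E g ∧ ∀ ρ, IsPlay E v₀ ρ → ConsLastMove g ρ → ρ ∈ W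

/-- The cylinder generated by the finite word `π`. -/
def Cyl (π : List V) : Set (ℕ → V) := {ρ | pref ρ π.length = π}

/-- One-step transition probabilities obtained from the weights `w`. -/
noncomputable def transP [Fintype V] (E : V → V → Prop) (w : V → V → ℝ≥0) (u v : V) : ℝ≥0∞ := by
  classical
  exact if E u v then
    (w u v : ℝ≥0∞) / ∑ x ∈ Finset.univ.filter (fun x => E u x), (w u x : ℝ≥0∞)
  else 0

/-- The probability of the cylinder generated by a finite word: the product of the
one-step transition probabilities along it. -/
noncomputable def pathP [Fintype V] (E : V → V → Prop) (w : V → V → ℝ≥0) (π : List V) : ℝ≥0∞ :=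
  ((π.zip π.tail).map fun q => transP E w q.1 q.2).prod

/-- `P` is the reasonable probability measure associated with the weights `w`. -/
def IsReasonable [Fintype V] [MeasurableSpace (ℕ → V)] (E : V → V → Prop) (v₀ : V)
    (w : V → V → ℝ≥0) (P : Measure (ℕ → V)) : Prop :=
  IsProbabilityMeasure P ∧ ∀ π : List V, π.head? = some v₀ → P (Cyl π) = pathP E w π

/-- `Ps` is a legal move of player 0 in the generalised game `G_α` at position `π`: a
finite nonempty set of nonempty finite paths from the last vertex of `π` whose union of
cylinders has conditional probability at least `α` given `Cyl π`. -/
def LegalProposal [MeasurableSpace (ℕ → V)] (E : V → V → Prop) (P : Measure (ℕ → V)) (α : ℝ)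
    (π : List V) (Ps : Finset (List V)) : Prop :=
  Ps.Nonempty ∧ (∀ τ ∈ Ps, τ ≠ [] ∧ (π ++ τ).Chain' E) ∧
    ENNReal.ofReal α ≤ P (⋃ τ ∈ Ps, Cyl (π ++ τ)) / P (Cyl π)

/-- An α-strategy for player 0. -/
def IsAlphaStrategy [MeasurableSpace (ℕ → V)] (E : V → V → Prop) (v₀ : V) (P : Measure (ℕ → V))
    (α : ℝ) (f : List V → Finset (List V)) : Prop :=
  ∀ π, IsPos E v₀ π → LegalProposal E P α π (f π)

/-- Consistency with an α-strategy: at each stage, player 1 picks some element of the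
set proposed by player 0 and appends a nonempty block after it. -/
def ConsAlpha (f : List V → Finset (List V)) (ρ : ℕ → V) : Prop :=
  ∃ c : ℕ → ℕ, 1 ≤ c 0 ∧ ∀ i, ∃ τ ∈ f (pref ρ (c i)),
    pref ρ (c i + τ.length) = pref ρ (c i) ++ τ ∧ c i + τ.length < c (i + 1)

def AlphaWinning [MeasurableSpace (ℕ → V)] (E : V → V → Prop) (v₀ : V) (P : Measure (ℕ → V))
    (α : ℝ) (W : Set (ℕ → V)) (f : List V → Finset (List V)) : Prop :=
  IsAlphaStrategy E v₀ P α f ∧ ∀ ρ, IsPlay E v₀ ρ → ConsAlpha f ρ → ρ ∈ W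

/-- A strategy for player 1 in the generalised game `G_α` consists of an initial path and,
for each position together with a legal proposal of player 0, the selected element of the
proposal and the next (nonempty) block played by player 1. -/
def IsP1Strategy [MeasurableSpace (ℕ → V)] (E : V → V → Prop) (v₀ : V) (P : Measure (ℕ → V))
    (α : ℝ) (init : List V) (g : List V → Finset (List V) → List V × List V) : Prop :=
  IsPos E v₀ init ∧
    ∀ π Ps, IsPos E v₀ π → LegalProposal E P α π Ps →
      (g π Ps).1 ∈ Ps ∧ (g π Ps).2 ≠ [] ∧ (π ++ ((g π Ps).1 ++ (g π Ps).2)).Chain' E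

/-- Consistency of a play with player 1's strategy `(init, g)`:
there is a sequence of legal proposals of player 0 generating the play. -/
def ConsP1 [MeasurableSpace (ℕ → V)] (E : V → V → Prop) (P : Measure (ℕ → V)) (α : ℝ)
    (init : List V) (g : List V → Finset (List V) → List V × List V) (ρ : ℕ → V) : Prop :=
  ∃ (Ps : ℕ → Finset (List V)) (p : ℕ → List V), p 0 = init ∧
    (∀ n, pref ρ (p n).length = p n) ∧
    ∀ n, LegalProposal E P α (p n) (Ps n) ∧
      p (n + 1) = p n ++ ((g (p n) (Ps n)).1 ++ (g (p n) (Ps n)).2)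

def P1Winning [MeasurableSpace (ℕ → V)] (E : V → V → Prop) (v₀ : V) (P : Measure (ℕ → V))
    (α : ℝ) (W : Set (ℕ → V)) (init : List V)
    (g : List V → Finset (List V) → List V × List V) : Prop :=
  IsP1Strategy E v₀ P α init g ∧ ∀ ρ, IsPlay E v₀ ρ → ConsP1 E P α init g ρ → ρ ∉ W

/-- A union of cylinders, i.e. an open subset of the space of sequences. -/
def IsCylOpen (U : Set (ℕ → V)) : Prop :=
  ∃ S : Set (List V), U = ⋃ π ∈ S, Cyl π

/-- `W` is a countable intersection of open subsets of the space `Paths (G, v₀)`. -/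
def IsCountableInterOfOpens (E : V → V → Prop) (v₀ : V) (W : Set (ℕ → V)) : Prop :=
  ∃ U : ℕ → Set (ℕ → V), (∀ n, IsCylOpen (U n)) ∧
    W = {ρ | IsPlay E v₀ ρ} ∩ ⋂ n, U n

/-- For every `n`, the concatenation of the blocks `u 0, …, u (n-1)` is a prefix of `ρ`. -/
def AgreesWithBlocks (ρ : ℕ → V) (u : ℕ → List V) : Prop :=
  ∀ n, pref ρ (((List.range n).map u).flatten).length = ((List.range n).map u).flatten
end BMGame

open BMGame

section Aux

open scoped Classical

variable {V : Type*}

lemma pref_length (ρ : ℕ → V) (n : ℕ) : (pref ρ n).length = n := by simp [pref]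

lemma pref_eq_ofFn (ρ : ℕ → V) (n : ℕ) :
    pref ρ n = List.ofFn (fun i : Fin n => ρ i) := by
  apply List.ext_getElem
  · simp [pref]
  · intro i h1 h2
    simp [pref]

lemma seg_length (ρ : ℕ → V) (a b : ℕ) : (seg ρ a b).length = b - a := by simp [seg]

lemma pref_add (ρ : ℕ → V) (a b : ℕ) :
    pref ρ (a + b) = pref ρ a ++ seg ρ a (a + b) := by
  simp only [pref, seg, List.range_add, List.map_append, List.map_map,
    Nat.add_sub_cancel_left]
  rfl

lemma seg_congr {ρ ρ' : ℕ → V} {a b : ℕ} (hh : ∀ i, a ≤ i → i < b → ρ i = ρ' i) :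
    seg ρ a b = seg ρ' a b := by
  simp only [seg]
  apply List.map_congr_left
  intro j hj
  rw [List.mem_range] at hj
  exact hh _ (Nat.le_add_right _ _) (by omega)

lemma mem_cyl_ofFn {n : ℕ} (f : Fin n → V) (ρ : ℕ → V) :
    ρ ∈ Cyl (List.ofFn f) ↔ ∀ i : Fin n, ρ i = f i := by
  rw [Cyl, Set.mem_setOf_eq, List.length_ofFn, pref_eq_ofFn, List.ofFn_inj, funext_iff]

lemma mem_cyl_iff {π : List V} {ρ : ℕ → V} :
    ρ ∈ Cyl π ↔ ∀ i : Fin π.length, ρ i = π.get i := by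
  conv_lhs => rw [show π = List.ofFn π.get from (List.ofFn_get π).symm]
  rw [mem_cyl_ofFn]

lemma cyl_measurable [MeasurableSpace V] [MeasurableSingletonClass V] (π : List V) :
    MeasurableSet (Cyl π) := by
  have : Cyl π = ⋂ i : Fin π.length, (fun ρ : ℕ → V => ρ i) ⁻¹' {π.get i} := by
    ext ρ; simp [mem_cyl_iff]
  rw [this]
  exact MeasurableSet.iInter fun i =>
    (measurable_pi_apply _) (measurableSet_singleton _)


section Prob

variable [Fintype V] (E : V → V → Prop) (w : V → V → ℝ≥0)

lemma transP_def (u v : V) [Decidable (E u v)] :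
    transP E w u v = if E u v then
      (w u v : ℝ≥0∞) / ∑ x ∈ Finset.univ.filter (fun x => E u x), (w u x : ℝ≥0∞)
    else 0 := by
  unfold transP
  congr

lemma transP_of_not {u v : V} (h : ¬ E u v) : transP E w u v = 0 := by
  classical
  rw [transP_def, if_neg h]

lemma transP_le_one (u v : V) : transP E w u v ≤ 1 := by
  classical
  rw [transP_def]
  split
  · next h =>
    refine le_trans (ENNReal.div_le_div_right ?_ _) ENNReal.div_self_le_one
    exact Finset.single_le_sum (f := fun x => ((w u x : ℝ≥0∞)))
      (fun _ _ => zero_le) (by simpa using h)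
  · exact zero_le_one

lemma transP_ne_top (u v : V) : transP E w u v ≠ ∞ :=
  ne_top_of_le_ne_top ENNReal.one_ne_top (transP_le_one E w u v)

lemma transP_pos (hw : ∀ u v, E u v → 0 < w u v) {u v : V} (h : E u v) :
    0 < transP E w u v := by
  classical
  rw [transP_def, if_pos h]
  apply ENNReal.div_pos
  · simpa using (hw u v h).ne'
  · exact (ENNReal.sum_lt_top.mpr fun _ _ => ENNReal.coe_lt_top).ne

/-- Probability of the block `τ` after the vertex `u`. -/
noncomputable def blockProb : V → List V → ℝ≥0∞
  | _, [] => 1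
  | u, v :: τ => transP E w u v * blockProb v τ

@[simp] lemma blockProb_nil (u : V) : blockProb E w u [] = 1 := rfl

@[simp] lemma blockProb_cons (u v : V) (τ : List V) :
    blockProb E w u (v :: τ) = transP E w u v * blockProb E w v τ := rfl

lemma pathP_cons (u : V) (τ : List V) : pathP E w (u :: τ) = blockProb E w u τ := by
  induction τ generalizing u with
  | nil => simp [pathP]
  | cons v τ ih =>
    rw [blockProb_cons, ← ih]
    simp [pathP]

lemma blockProb_le_one (u : V) (τ : List V) : blockProb E w u τ ≤ 1 := by
  induction τ generalizing u with
  | nil => simp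
  | cons v τ ih => exact mul_le_one' (transP_le_one E w u v) (ih v)

lemma pathP_le_one (π : List V) : pathP E w π ≤ 1 := by
  cases π with
  | nil => simp [pathP]
  | cons u τ => rw [pathP_cons]; exact blockProb_le_one E w u τ

lemma blockProb_pos (hw : ∀ u v, E u v → 0 < w u v) {u : V} {τ : List V}
    (hc : (u :: τ).Chain' E) : 0 < blockProb E w u τ := by
  induction τ generalizing u with
  | nil => simp
  | cons v τ ih =>
    simp only [List.Chain', List.isChain_cons_cons] at hc
    exact ENNReal.mul_pos (transP_pos E w hw hc.1).ne' (ih hc.2).ne'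

lemma blockProb_append (u : V) (τ β : List V) :
    blockProb E w u (τ ++ β)
      = blockProb E w u τ * blockProb E w ((u :: τ).getLast (by simp)) β := by
  induction τ generalizing u with
  | nil => simp
  | cons v τ ih =>
    rw [List.cons_append, blockProb_cons, blockProb_cons, ih, mul_assoc,
      List.getLast_cons_cons]

lemma pathP_append (u : V) (τ β : List V) :
    pathP E w ((u :: τ) ++ β)
      = pathP E w (u :: τ) * blockProb E w ((u :: τ).getLast (by simp)) β := by
  rw [List.cons_append, pathP_cons, pathP_cons, blockProb_append]

lemma blockProb_eq_zero (hw : ∀ u v, E u v → 0 < w u v) {u : V} {τ : List V}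
    (hc : ¬ (u :: τ).Chain' E) : blockProb E w u τ = 0 := by
  induction τ generalizing u with
  | nil => simp [List.Chain', List.isChain_singleton] at hc
  | cons v τ ih =>
    simp only [List.Chain', List.isChain_cons_cons] at hc
    rw [blockProb_cons]
    by_cases h : E u v
    · rw [ih (by tauto), mul_zero]
    · rw [transP_of_not E w h, zero_mul]

lemma pathP_eq_zero (hw : ∀ u v, E u v → 0 < w u v) {π : List V}
    (hc : ¬ π.Chain' E) : pathP E w π = 0 := by
  cases π with
  | nil => simp [List.Chain', List.isChain_nil] at hc
  | cons u τ => rw [pathP_cons]; exact blockProb_eq_zero E w hw hc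

end Prob


section Decomp

variable [Fintype V]

/-- Extension of a finite tuple to an infinite sequence. -/
noncomputable def extendFn (v₀ : V) (n : ℕ) (f : Fin n → V) : ℕ → V :=
  fun i => if h : i < n then f ⟨i, h⟩ else v₀

lemma decomp (v₀ : V) (A : Set (ℕ → V)) (n : ℕ)
    (hdet : ∀ ρ ρ' : ℕ → V, (∀ i, i < n → ρ i = ρ' i) → ρ ∈ A → ρ' ∈ A) :
    A = ⋃ f ∈ Finset.univ.filter (fun f : Fin n → V => extendFn v₀ n f ∈ A),
      Cyl (List.ofFn f) := by
  ext ρ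
  simp only [Set.mem_iUnion, Finset.mem_filter, Finset.mem_univ, true_and,
    exists_prop]
  constructor
  · intro hρ
    refine ⟨fun i : Fin n => ρ i, ?_, ?_⟩
    · exact hdet ρ _ (fun i hi => by simp [extendFn, hi]) hρ
    · rw [mem_cyl_ofFn]; intro i; rfl
  · rintro ⟨f, hf, hρ⟩
    rw [mem_cyl_ofFn] at hρ
    refine hdet (extendFn v₀ n f) ρ (fun i hi => ?_) hf
    rw [extendFn]; simp only [hi, dif_pos]
    exact (hρ ⟨i, hi⟩).symm

lemma cyl_disjoint {n : ℕ} {f g : Fin n → V} (hfg : f ≠ g) :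
    Disjoint (Cyl (List.ofFn f)) (Cyl (List.ofFn g)) := by
  rw [Set.disjoint_left]
  intro ρ hf hg
  rw [mem_cyl_ofFn] at hf hg
  exact hfg (funext fun i => (hf i).symm.trans (hg i))

variable [MeasurableSpace V] [MeasurableSingletonClass V]

lemma meas_decomp_eq (v₀ : V) (P : Measure (ℕ → V)) (A : Set (ℕ → V)) (n : ℕ)
    (hdet : ∀ ρ ρ' : ℕ → V, (∀ i, i < n → ρ i = ρ' i) → ρ ∈ A → ρ' ∈ A) :
    P A = ∑ f ∈ Finset.univ.filter (fun f : Fin n → V => extendFn v₀ n f ∈ A),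
      P (Cyl (List.ofFn f)) := by
  conv_lhs => rw [decomp v₀ A n hdet]
  refine measure_biUnion_finset ?_ ?_
  · intro f _ g _ hfg
    exact cyl_disjoint hfg
  · intro f _
    exact cyl_measurable _

lemma decomp_full (v₀ : V) (P : Measure (ℕ → V)) (A : Set (ℕ → V)) (n : ℕ)
    (hdet : ∀ ρ ρ' : ℕ → V, (∀ i, i < n → ρ i = ρ' i) → ρ ∈ A → ρ' ∈ A) :
    ∃ T : Finset (Fin n → V),
      (A = ⋃ f ∈ T, Cyl (List.ofFn f)) ∧ (∀ f ∈ T, extendFn v₀ n f ∈ A) ∧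
      (P A = ∑ f ∈ T, P (Cyl (List.ofFn f))) := by
  refine ⟨Finset.univ.filter (fun f : Fin n → V => extendFn v₀ n f ∈ A),
    decomp v₀ A n hdet, ?_, meas_decomp_eq v₀ P A n hdet⟩
  intro f hf
  exact (Finset.mem_filter.mp hf).2

end Decomp


section Main

variable [Fintype V] [MeasurableSpace V] [DiscreteMeasurableSpace V]

/-- At time `t`, the next block of the run `ρ` matches the strategy's move `k`. -/
def BlockAt (h : V → ℕ → List V) (k : ℕ) (ρ : ℕ → V) (t : ℕ) : Prop :=
  seg ρ t (t + (h (ρ (t - 1)) k).length) = h (ρ (t - 1)) k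

lemma head?_eq_get {π : List V} (h : 0 < π.length) :
    π.head? = some (π.get ⟨0, h⟩) := by
  cases π with
  | nil => simp at h
  | cons a l => rfl

lemma pathP_append' (E : V → V → Prop) (w : V → V → ℝ≥0) {π : List V}
    (hne : π ≠ []) (β : List V) :
    pathP E w (π ++ β) = pathP E w π * blockProb E w (π.getLast hne) β := by
  cases π with
  | nil => exact absurd rfl hne
  | cons u τ => exact pathP_append E w u τ β

lemma bad_null (E : V → V → Prop) (v₀ : V) (w : V → V → ℝ≥0)
    (hw : ∀ u v, E u v → 0 < w u v) (P : Measure (ℕ → V)) (hP : IsReasonable E v₀ w P)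
    (h : V → ℕ → List V) (hs : IsCountingStrategy E h) (k m : ℕ) (hk : 1 ≤ k) (hm : 1 ≤ m) :
    P {ρ | ρ 0 = v₀ ∧ ∀ t, m ≤ t → ¬ BlockAt h k ρ t} = 0 := by
  haveI : Nonempty V := ⟨v₀⟩
  haveI := hP.1
  set L := (Finset.univ.sup fun v : V => (h v k).length) + 1 with hLdef
  have hL : ∀ v, (h v k).length < L := fun v =>
    Nat.lt_succ_of_le (Finset.le_sup (f := fun v => (h v k).length) (Finset.mem_univ v))
  set ε := Finset.univ.inf' Finset.univ_nonempty
    (fun u : V => blockProb E w u (h u k)) with hεdef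
  have hε_le : ∀ u, ε ≤ blockProb E w u (h u k) := fun u =>
    Finset.inf'_le _ (Finset.mem_univ u)
  have hε_pos : 0 < ε := by
    rw [hεdef, Finset.lt_inf'_iff]
    exact fun u _ => blockProb_pos E w hw (hs u k hk).2
  have hε_one : ε ≤ 1 := (hε_le v₀).trans (blockProb_le_one E w _ _)
  set B : ℕ → Set (ℕ → V) := fun J =>
    {ρ | ρ 0 = v₀ ∧ ∀ j, j < J → ¬ BlockAt h k ρ (m + j * L)} with hBdef
  have hdet : ∀ J, ∀ ρ ρ' : ℕ → V,
      (∀ i, i < m + J * L → ρ i = ρ' i) → ρ ∈ B J → ρ' ∈ B J := by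
    intro J ρ ρ' hag hρ
    obtain ⟨h0, hb⟩ := hρ
    have hbound : ∀ j, j < J → m + j * L + L ≤ m + J * L := by
      intro j hj
      have h2 : (j + 1) * L ≤ J * L := Nat.mul_le_mul_right L hj
      rw [add_mul, one_mul] at h2
      omega
    refine ⟨by rw [← hag 0 (by omega)]; exact h0, ?_⟩
    intro j hj hblock
    apply hb j hj
    have hjL := hbound j hj
    have heq : ρ (m + j * L - 1) = ρ' (m + j * L - 1) := hag _ (by omega)
    rw [BlockAt, heq]
    rw [BlockAt] at hblock
    have hsg : seg ρ (m + j * L) (m + j * L + (h (ρ' (m + j * L - 1)) k).length)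
        = seg ρ' (m + j * L) (m + j * L + (h (ρ' (m + j * L - 1)) k).length) := by
      apply seg_congr
      intro i hi1 hi2
      have hlen := hL (ρ' (m + j * L - 1))
      exact hag i (by omega)
    rw [hsg]
    exact hblock
  have key : ∀ J, P (B J) ≤ (1 - ε) ^ J := by
    intro J
    induction J with
    | zero => simpa using prob_le_one
    | succ J ih =>
      set n := m + J * L with hn
      have hn1 : 1 ≤ n := le_trans hm (Nat.le_add_right m _)
      obtain ⟨T, hBJ, hTmem, hPsum⟩ := decomp_full v₀ P (B J) n (hdet J)
      have hsub : B (J + 1) ⊆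
          ⋃ f ∈ T, (Cyl (List.ofFn f) ∩ {ρ | ¬ BlockAt h k ρ n}) := by
        intro ρ hρ
        have hρJ : ρ ∈ B J := ⟨hρ.1, fun j hj => hρ.2 j (Nat.lt_succ_of_lt hj)⟩
        rw [hBJ] at hρJ
        simp only [Set.mem_iUnion, exists_prop] at hρJ ⊢
        obtain ⟨f, hf, hcf⟩ := hρJ
        exact ⟨f, hf, hcf, hρ.2 J (Nat.lt_succ_self J)⟩
      have hterm : ∀ f ∈ T, P (Cyl (List.ofFn f) ∩ {ρ | ¬ BlockAt h k ρ n})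
          ≤ (1 - ε) * P (Cyl (List.ofFn f)) := by
        intro f hf
        have hf0 : f ⟨0, hn1⟩ = v₀ := by
          have h00 := (hTmem f hf).1
          rwa [extendFn, dif_pos (show (0:ℕ) < n from hn1)] at h00
        have hπlen : (List.ofFn f).length = n := List.length_ofFn
        have hπpos : 0 < (List.ofFn f).length := by omega
        have hπne : List.ofFn f ≠ [] := List.ne_nil_of_length_pos hπpos
        have hhead : (List.ofFn f).head? = some v₀ := by
          rw [head?_eq_get hπpos, List.get_ofFn]
          congr 1
        set u := (List.ofFn f).getLast hπne with hu
        have hlastmem : ∀ ρ ∈ Cyl (List.ofFn f), ρ (n - 1) = u := by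
          intro ρ hρ
          rw [mem_cyl_iff] at hρ
          have h1 := hρ ⟨n - 1, by omega⟩
          rw [hu, List.getLast_eq_getElem]
          rw [h1]
          simp only [List.get_eq_getElem]
          congr 1
          omega
        have hmatch : Cyl (List.ofFn f) ∩ {ρ | BlockAt h k ρ n}
            = Cyl (List.ofFn f ++ h u k) := by
          ext ρ
          simp only [Set.mem_inter_iff, Set.mem_setOf_eq]
          constructor
          · rintro ⟨hc, hb⟩
            rw [Cyl, Set.mem_setOf_eq, List.length_append, hπlen, pref_add]
            rw [BlockAt, hlastmem ρ hc] at hb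
            rw [hb]
            congr 1
            rw [Cyl, Set.mem_setOf_eq, hπlen] at hc
            exact hc
          · intro hc
            rw [Cyl, Set.mem_setOf_eq, List.length_append, hπlen, pref_add] at hc
            have hlen1 : (pref ρ n).length = (List.ofFn f).length := by
              rw [pref_length, hπlen]
            obtain ⟨hc1, hc2⟩ := List.append_inj hc hlen1
            have hcyl : ρ ∈ Cyl (List.ofFn f) := by
              rw [Cyl, Set.mem_setOf_eq, hπlen]; exact hc1
            refine ⟨hcyl, ?_⟩
            rw [BlockAt, hlastmem ρ hcyl]
            exact hc2
        have hfail : Cyl (List.ofFn f) ∩ {ρ | ¬ BlockAt h k ρ n}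
            = Cyl (List.ofFn f) \ Cyl (List.ofFn f ++ h u k) := by
          rw [← hmatch]
          ext ρ
          simp only [Set.mem_inter_iff, Set.mem_setOf_eq, Set.mem_diff]
          tauto
        have hheadapp : (List.ofFn f ++ h u k).head? = some v₀ := by
          rw [List.head?_append_of_ne_nil _ hπne]
          exact hhead
        have hPπ : P (Cyl (List.ofFn f)) = pathP E w (List.ofFn f) := hP.2 _ hhead
        have hPπβ : P (Cyl (List.ofFn f ++ h u k)) = pathP E w (List.ofFn f ++ h u k) :=
          hP.2 _ hheadapp
        have hsubc : Cyl (List.ofFn f ++ h u k) ⊆ Cyl (List.ofFn f) := by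
          rw [← hmatch]; exact Set.inter_subset_left
        rw [hfail, measure_diff hsubc (cyl_measurable _).nullMeasurableSet
          (measure_ne_top P _), hPπ, hPπβ, pathP_append' E w hπne, ← hu]
        calc pathP E w (List.ofFn f) - pathP E w (List.ofFn f) * blockProb E w u (h u k)
            ≤ pathP E w (List.ofFn f) - pathP E w (List.ofFn f) * ε :=
              tsub_le_tsub_left (mul_le_mul_right (hε_le u) _) _
          _ ≤ (1 - ε) * pathP E w (List.ofFn f) := by
              rw [tsub_le_iff_right, mul_comm (pathP E w (List.ofFn f)) ε, ← add_mul,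
                tsub_add_cancel_of_le hε_one, one_mul]
      calc P (B (J + 1))
          ≤ P (⋃ f ∈ T, (Cyl (List.ofFn f) ∩ {ρ | ¬ BlockAt h k ρ n})) :=
            measure_mono hsub
        _ ≤ ∑ f ∈ T, P (Cyl (List.ofFn f) ∩ {ρ | ¬ BlockAt h k ρ n}) :=
            measure_biUnion_finset_le T _
        _ ≤ ∑ f ∈ T, (1 - ε) * P (Cyl (List.ofFn f)) := Finset.sum_le_sum hterm
        _ = (1 - ε) * ∑ f ∈ T, P (Cyl (List.ofFn f)) := (Finset.mul_sum _ _ _).symm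
        _ = (1 - ε) * P (B J) := by rw [hPsum]
        _ ≤ (1 - ε) * (1 - ε) ^ J := mul_le_mul_right ih _
        _ = (1 - ε) ^ (J + 1) := (pow_succ' _ _).symm
  have hsub2 : ∀ J, {ρ | ρ 0 = v₀ ∧ ∀ t, m ≤ t → ¬ BlockAt h k ρ t} ⊆ B J := by
    intro J ρ hρ
    exact ⟨hρ.1, fun j _ => hρ.2 _ (Nat.le_add_right m _)⟩
  refine le_antisymm ?_ zero_le
  have htd : Filter.Tendsto (fun J => (1 - ε) ^ J) Filter.atTop (nhds 0) :=
    ENNReal.tendsto_pow_atTop_nhds_zero_of_lt_one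
      (ENNReal.sub_lt_self ENNReal.one_ne_top one_ne_zero hε_pos.ne')
  exact ge_of_tendsto' htd fun J => (measure_mono (hsub2 J)).trans (key J)

lemma head?_ofFn_eq {n : ℕ} (f : Fin n → V) (hn : 0 < n) (v₀ : V)
    (h0 : f ⟨0, hn⟩ = v₀) : (List.ofFn f).head? = some v₀ := by
  have hπpos : 0 < (List.ofFn f).length := by rw [List.length_ofFn]; exact hn
  rw [head?_eq_get hπpos, List.get_ofFn]
  congr 1

lemma nonplays_null (E : V → V → Prop) (v₀ : V) (w : V → V → ℝ≥0)
    (hw : ∀ u v, E u v → 0 < w u v) (P : Measure (ℕ → V)) (hP : IsReasonable E v₀ w P) :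
    P {ρ | ¬ IsPlay E v₀ ρ} = 0 := by
  haveI := hP.1
  have hsub : {ρ : ℕ → V | ¬ IsPlay E v₀ ρ} ⊆
      {ρ : ℕ → V | ρ 0 ≠ v₀} ∪
        ⋃ n : ℕ, {ρ : ℕ → V | ρ 0 = v₀ ∧ ¬ E (ρ n) (ρ (n + 1))} := by
    intro ρ hρ
    rw [Set.mem_setOf_eq, IsPlay, not_and_or] at hρ
    by_cases h0 : ρ 0 = v₀
    · rcases hρ with h | hn
      · exact Or.inl h
      · push_neg at hn
        obtain ⟨n, hn⟩ := hn
        exact Or.inr (Set.mem_iUnion.mpr ⟨n, h0, hn⟩)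
    · exact Or.inl h0
  refine measure_mono_null hsub (measure_union_null ?_ (measure_iUnion_null ?_))
  · have hcyl : {ρ : ℕ → V | ρ 0 ≠ v₀} = (Cyl [v₀])ᶜ := by
      ext ρ
      simp [Cyl, pref, List.range_succ]
    rw [hcyl, measure_compl (cyl_measurable _) (measure_ne_top P _),
      hP.2 [v₀] rfl]
    simp [pathP]
  · intro n
    have hdet : ∀ ρ ρ' : ℕ → V, (∀ i, i < n + 2 → ρ i = ρ' i) →
        ρ ∈ {ρ : ℕ → V | ρ 0 = v₀ ∧ ¬ E (ρ n) (ρ (n + 1))} →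
        ρ' ∈ {ρ : ℕ → V | ρ 0 = v₀ ∧ ¬ E (ρ n) (ρ (n + 1))} := by
      intro ρ ρ' hag hρ
      refine ⟨by rw [← hag 0 (by omega)]; exact hρ.1, ?_⟩
      rw [← hag n (by omega), ← hag (n + 1) (by omega)]
      exact hρ.2
    obtain ⟨T, hA, hTmem, hsum⟩ := decomp_full v₀ P _ (n + 2) hdet
    rw [hsum]
    apply Finset.sum_eq_zero
    intro f hf
    have h1 := hTmem f hf
    have hf0 : f ⟨0, by omega⟩ = v₀ := by
      have h00 := h1.1
      rwa [extendFn, dif_pos (show (0:ℕ) < n + 2 by omega)] at h00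
    have hfE : ¬ E (f ⟨n, by omega⟩) (f ⟨n + 1, by omega⟩) := by
      have h00 := h1.2
      rwa [extendFn, extendFn, dif_pos (show n < n + 2 by omega),
        dif_pos (show n + 1 < n + 2 by omega)] at h00
    have hhead : (List.ofFn f).head? = some v₀ := head?_ofFn_eq f (by omega) v₀ hf0
    rw [hP.2 _ hhead]
    apply pathP_eq_zero E w hw
    intro hc
    simp only [List.Chain', List.isChain_iff_getElem] at hc
    have hlen : (List.ofFn f).length = n + 2 := List.length_ofFn
    have := hc n (by omega)
    simp only [List.getElem_ofFn] at this
    apply hfE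
    convert this using 2 <;> simp

/-- Construction of the cut sequence from cofinally many matching blocks. -/
lemma cons_of_cofinal (h : V → ℕ → List V) (ρ : ℕ → V)
    (H : ∀ k, 1 ≤ k → ∀ m, 1 ≤ m → ∃ t, m ≤ t ∧ BlockAt h k ρ t) :
    ConsMoveCounting h ρ := by
  have hF : ∀ k m : ℕ, ∃ t, 1 ≤ k → 1 ≤ m → (m ≤ t ∧ BlockAt h k ρ t) := by
    intro k m
    by_cases hkm : 1 ≤ k ∧ 1 ≤ m
    · obtain ⟨t, ht1, ht2⟩ := H k hkm.1 m hkm.2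
      exact ⟨t, fun _ _ => ⟨ht1, ht2⟩⟩
    · exact ⟨1, fun h1 h2 => absurd ⟨h1, h2⟩ hkm⟩
  choose F hFspec using hF
  set c : ℕ → ℕ := fun i => Nat.rec (motive := fun _ => ℕ) (F 1 1)
    (fun i ci => F (i + 2) (ci + (h (ρ (ci - 1)) (i + 1)).length + 1)) i with hc
  have hc0 : c 0 = F 1 1 := rfl
  have hcsucc : ∀ i, c (i + 1) = F (i + 2) (c i + (h (ρ (c i - 1)) (i + 1)).length + 1) :=
    fun i => rfl
  have hcp : ∀ i, 1 ≤ c i ∧ BlockAt h (i + 1) ρ (c i) := by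
    intro i
    cases i with
    | zero =>
      obtain ⟨ht1, ht2⟩ := hFspec 1 1 le_rfl le_rfl
      exact ⟨ht1, ht2⟩
    | succ i =>
      obtain ⟨ht1, ht2⟩ := hFspec (i + 2) (c i + (h (ρ (c i - 1)) (i + 1)).length + 1)
        (by omega) (by omega)
      rw [hcsucc i]
      exact ⟨by omega, ht2⟩
  have hgap : ∀ i, c i + (h (ρ (c i - 1)) (i + 1)).length < c (i + 1) := by
    intro i
    obtain ⟨ht1, _⟩ := hFspec (i + 2) (c i + (h (ρ (c i - 1)) (i + 1)).length + 1)
      (by omega) (by omega)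
    rw [hcsucc i]
    omega
  refine ⟨c, (hcp 0).1, fun i => ⟨?_, hgap i⟩⟩
  have hb := (hcp i).2
  rw [BlockAt] at hb
  rw [pref_add, hb]

end Main

end Aux

/-- If Player 0 has a move-counting winning strategy for a Banach–Mazur game `(G, v₀, W)`
on a finite graph, then `P (W) = 1` for every reasonable probability measure `P`. -/
theorem stmt7 {V : Type*} [Fintype V] [MeasurableSpace V] [DiscreteMeasurableSpace V]
    (E : V → V → Prop) (hE : ∀ v, ∃ u, E v u) (v₀ : V)
    (W : Set (ℕ → V)) (hW : W ⊆ {ρ | IsPlay E v₀ ρ})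
    (w : V → V → ℝ≥0) (hw : ∀ u v, E u v → 0 < w u v)
    (P : MeasureTheory.Measure (ℕ → V)) (hP : IsReasonable E v₀ w P)
    (hmc : ∃ h : V → ℕ → List V, MoveCountingWinning E v₀ W h) :
    P Wᶜ = 0 := by
  obtain ⟨h, hs, hwin⟩ := hmc
  have hbig : Wᶜ ⊆ {ρ | ¬ IsPlay E v₀ ρ} ∪
      ⋃ (k : ℕ) (m : ℕ),
        {ρ | ρ 0 = v₀ ∧ ∀ t, m + 1 ≤ t → ¬ BlockAt h (k + 1) ρ t} := by
    intro ρ hρ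
    by_cases hplay : IsPlay E v₀ ρ
    · right
      by_cases H : ∀ k, 1 ≤ k → ∀ m, 1 ≤ m → ∃ t, m ≤ t ∧ BlockAt h k ρ t
      · exact absurd (hwin ρ hplay (cons_of_cofinal h ρ H)) hρ
      · push_neg at H
        obtain ⟨k, hk, m, hm, ht⟩ := H
        simp only [Set.mem_iUnion]
        refine ⟨k - 1, m - 1, hplay.1, fun t htm => ?_⟩
        have h2 := ht t (by omega)
        rwa [show k - 1 + 1 = k by omega]
    · exact Or.inl hplay
  refine measure_mono_null hbig
    (measure_union_null (nonplays_null E v₀ w hw P hP)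
      (measure_iUnion_null fun k => measure_iUnion_null fun m => ?_))
  exact bad_null E v₀ w hw P hP h hs (k + 1) (m + 1) (by omega) (by omega)
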